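/- (Theorem 3, stochastic part) Let Ȳ_1,…,Ȳ_k be independent random variables with Ȳ_j distributed as N(μ_j, σ²/n_j). Then for each i, j ∈ [1,k] and every real x, the probability P(μ̂_{i,k}(Ȳ_1,…,Ȳ_k) > x) is a nondecreasing function of μ_j when the other means μ_{j'} (j' ≠ j) and σ > 0 are held fixed; i.e., the distribution of μ̂_{i,k} is stochastically nondecreasing in each μ_j. -/
import Mathlib


open Finset

noncomputable section SDMMSA

/-- Pooled weight `n_{i,j} = ∑_{h=i}^j n_h`. -/
def pooledWeight (n : ℕ → ℝ) (i j : ℕ) : ℝ := ∑ h ∈ Finset.Icc i j, n h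

/-- Pooled (weighted) mean `Ȳ_{i,j} = (∑_{h=i}^j n_h Y_h) / n_{i,j}`. -/
def pooledMean (n Y : ℕ → ℝ) (i j : ℕ) : ℝ :=
  (∑ h ∈ Finset.Icc i j, n h * Y h) / pooledWeight n i j

/-- The first SDMMSA index for the data `(Y_1,n_1),…,(Y_t,n_t)`:
the smallest `j ∈ [1,t]` at which `Ȳ_{j,t} = max_{1 ≤ j' ≤ t} Ȳ_{j',t}`. -/
def firstIdx (n Y : ℕ → ℝ) (t : ℕ) : ℕ :=
  sInf {j | 1 ≤ j ∧ j ≤ t ∧ ∀ j', 1 ≤ j' → j' ≤ t → pooledMean n Y j' t ≤ pooledMean n Y j t}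

/-- Fuel-based recursion implementing the SDMMSA step-down procedure: on data range `[1,t]`,
every `i ≥ i₁ = firstIdx n Y t` gets the pooled mean `Ȳ_{i₁,t}` of the top block, and for
`i < i₁` we recurse on the data range `[1, i₁ - 1]`.  A fuel of `t` suffices since the
range shrinks strictly at each step. -/
def sdmmsaAux (n Y : ℕ → ℝ) : ℕ → ℕ → ℕ → ℝ
  | 0, _, _ => 0
  | fuel + 1, t, i =>
      if firstIdx n Y t ≤ i then pooledMean n Y (firstIdx n Y t) t
      else sdmmsaAux n Y fuel (firstIdx n Y t - 1) i

/-- `muhat n Y k i` is the SDMMSA estimate `μ̂_i` computed from the data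
`(Y_1,n_1),…,(Y_k,n_k)`. -/
def muhat (n Y : ℕ → ℝ) (k i : ℕ) : ℝ := sdmmsaAux n Y k k i

/-- The SDMMSA indices `i_u` computed from the data `(Y_1,n_1),…,(Y_k,n_k)`:
`sdIdx n Y k 0 = i_0 = k+1` and `i_{u+1}` is the first SDMMSA index of `[1, i_u - 1]`. -/
def sdIdx (n Y : ℕ → ℝ) (k : ℕ) : ℕ → ℕ
  | 0 => k + 1
  | u + 1 => firstIdx n Y (sdIdx n Y k u - 1)

/-- The number of steps `h` of the SDMMSA: the first `u` with `i_u = 1`. -/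
def sdSteps (n Y : ℕ → ℝ) (k : ℕ) : ℕ := sInf {u | sdIdx n Y k u = 1}

end SDMMSA

open MeasureTheory ProbabilityTheory

noncomputable section AuxLemmas

variable (n : ℕ → ℝ)

private lemma sum_Icc_split (f : ℕ → ℝ) {s m t : ℕ} (h1 : s ≤ m) (h2 : m < t) :
    ∑ h ∈ Finset.Icc s t, f h
      = (∑ h ∈ Finset.Icc s m, f h) + ∑ h ∈ Finset.Icc (m + 1) t, f h := by
  have hu : Finset.Icc s t = Finset.Icc s m ∪ Finset.Icc (m + 1) t := by
    ext a; simp only [Finset.mem_Icc, Finset.mem_union]; omega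
  rw [hu, Finset.sum_union]
  refine Finset.disjoint_left.mpr ?_
  intro a ha hb
  simp only [Finset.mem_Icc] at ha hb
  omega

private lemma pooledWeight_pos {s t : ℕ} (h1 : 1 ≤ s) (h2 : s ≤ t)
    (hn : ∀ h, 1 ≤ h → h ≤ t → 0 < n h) : 0 < pooledWeight n s t := by
  refine Finset.sum_pos (fun h hh => ?_) ⟨s, Finset.mem_Icc.mpr ⟨le_rfl, h2⟩⟩
  rw [Finset.mem_Icc] at hh
  exact hn h (h1.trans hh.1) hh.2

/-- If the whole pooled mean is `≥ c` and the right part is `≤ c`, the left part is `≥ c`. -/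
private lemma pooledMean_left_ge {Y : ℕ → ℝ} {s m t : ℕ} {c : ℝ}
    (h1 : 1 ≤ s) (hsm : s ≤ m) (hmt : m < t)
    (hn : ∀ h, 1 ≤ h → h ≤ t → 0 < n h)
    (hw : c ≤ pooledMean n Y s t) (hr : pooledMean n Y (m + 1) t ≤ c) :
    c ≤ pooledMean n Y s m := by
  have hWa : 0 < pooledWeight n s m :=
    pooledWeight_pos n h1 hsm (fun h a b => hn h a (b.trans hmt.le))
  have hWb : 0 < pooledWeight n (m + 1) t :=
    pooledWeight_pos n (by omega) (by omega) hn
  have hW : 0 < pooledWeight n s t := pooledWeight_pos n h1 (hsm.trans hmt.le) hn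
  have hsplitW : pooledWeight n s t = pooledWeight n s m + pooledWeight n (m + 1) t :=
    sum_Icc_split _ hsm hmt
  have hsplitS : (∑ h ∈ Finset.Icc s t, n h * Y h)
      = (∑ h ∈ Finset.Icc s m, n h * Y h) + ∑ h ∈ Finset.Icc (m + 1) t, n h * Y h :=
    sum_Icc_split _ hsm hmt
  rw [pooledMean, le_div_iff₀ hWa]
  rw [pooledMean, le_div_iff₀ hW, hsplitW, hsplitS] at hw
  rw [pooledMean, div_le_iff₀ hWb] at hr
  nlinarith [hw, hr]

/-- If the whole pooled mean is `≤ c` and the right part is `≥ c`, the left part is `≤ c`. -/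
private lemma pooledMean_left_le {Y : ℕ → ℝ} {s m t : ℕ} {c : ℝ}
    (h1 : 1 ≤ s) (hsm : s ≤ m) (hmt : m < t)
    (hn : ∀ h, 1 ≤ h → h ≤ t → 0 < n h)
    (hw : pooledMean n Y s t ≤ c) (hr : c ≤ pooledMean n Y (m + 1) t) :
    pooledMean n Y s m ≤ c := by
  have hWa : 0 < pooledWeight n s m :=
    pooledWeight_pos n h1 hsm (fun h a b => hn h a (b.trans hmt.le))
  have hWb : 0 < pooledWeight n (m + 1) t :=
    pooledWeight_pos n (by omega) (by omega) hn
  have hW : 0 < pooledWeight n s t := pooledWeight_pos n h1 (hsm.trans hmt.le) hn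
  have hsplitW : pooledWeight n s t = pooledWeight n s m + pooledWeight n (m + 1) t :=
    sum_Icc_split _ hsm hmt
  have hsplitS : (∑ h ∈ Finset.Icc s t, n h * Y h)
      = (∑ h ∈ Finset.Icc s m, n h * Y h) + ∑ h ∈ Finset.Icc (m + 1) t, n h * Y h :=
    sum_Icc_split _ hsm hmt
  rw [pooledMean, div_le_iff₀ hWa]
  rw [pooledMean, div_le_iff₀ hW, hsplitW, hsplitS] at hw
  rw [pooledMean, le_div_iff₀ hWb] at hr
  nlinarith [hw, hr]

private lemma pooledMean_mono {Y Y' : ℕ → ℝ} (hY : ∀ h, Y h ≤ Y' h) {s t : ℕ}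
    (h1 : 1 ≤ s) (h2 : s ≤ t) (hn : ∀ h, 1 ≤ h → h ≤ t → 0 < n h) :
    pooledMean n Y s t ≤ pooledMean n Y' s t := by
  have hW := pooledWeight_pos n h1 h2 hn
  rw [pooledMean, pooledMean, div_le_div_iff_of_pos_right hW]
  refine Finset.sum_le_sum (fun h hh => ?_)
  rw [Finset.mem_Icc] at hh
  exact mul_le_mul_of_nonneg_left (hY h) (hn h (h1.trans hh.1) hh.2).le

private lemma firstIdx_spec (Y : ℕ → ℝ) {t : ℕ} (ht : 1 ≤ t) :
    1 ≤ firstIdx n Y t ∧ firstIdx n Y t ≤ t ∧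
      ∀ j', 1 ≤ j' → j' ≤ t →
        pooledMean n Y j' t ≤ pooledMean n Y (firstIdx n Y t) t := by
  have hne : {j | 1 ≤ j ∧ j ≤ t ∧ ∀ j', 1 ≤ j' → j' ≤ t →
      pooledMean n Y j' t ≤ pooledMean n Y j t}.Nonempty := by
    obtain ⟨b, hb, hmax⟩ := Finset.exists_max_image (Finset.Icc 1 t)
      (fun j => pooledMean n Y j t) ⟨1, Finset.mem_Icc.mpr ⟨le_rfl, ht⟩⟩
    rw [Finset.mem_Icc] at hb
    exact ⟨b, hb.1, hb.2, fun j' h1 h2 => hmax j' (Finset.mem_Icc.mpr ⟨h1, h2⟩)⟩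
  exact Nat.sInf_mem hne

/-- `blockMax n Y t' = max_{1 ≤ s ≤ t'} Ȳ_{s,t'}` (with a junk-safe `max 1 t'`). -/
noncomputable def blockMax (Y : ℕ → ℝ) (t' : ℕ) : ℝ :=
  (Finset.Icc 1 (max 1 t')).sup' (Finset.nonempty_Icc.mpr (le_max_left 1 t'))
    (fun s => pooledMean n Y s t')

private lemma le_blockMax (Y : ℕ → ℝ) {s t' : ℕ} (h1 : 1 ≤ s) (h2 : s ≤ t') :
    pooledMean n Y s t' ≤ blockMax n Y t' := by
  rw [blockMax]
  exact Finset.le_sup' (fun s => pooledMean n Y s t') (Finset.mem_Icc.mpr ⟨h1, h2.trans (le_max_right 1 t')⟩)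

private lemma blockMax_le (Y : ℕ → ℝ) {t' : ℕ} {c : ℝ} (ht' : 1 ≤ t')
    (hc : ∀ s, 1 ≤ s → s ≤ t' → pooledMean n Y s t' ≤ c) :
    blockMax n Y t' ≤ c := by
  refine Finset.sup'_le _ _ (fun s hs => ?_)
  rw [Finset.mem_Icc, max_eq_right ht'] at hs
  exact hc s hs.1 hs.2

/-- Min–max representation of the SDMMSA estimator:
`μ̂_i = min_{t' ∈ [i,t]} max_{1 ≤ s ≤ t'} Ȳ_{s,t'}`. -/
private lemma sdmmsaAux_minmax (Y : ℕ → ℝ) :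
    ∀ fuel t i, 1 ≤ i → (hit : i ≤ t) → t ≤ fuel →
    (∀ h, 1 ≤ h → h ≤ t → 0 < n h) →
    sdmmsaAux n Y fuel t i
      = (Finset.Icc i t).inf' (Finset.nonempty_Icc.mpr hit) (blockMax n Y) := by
  intro fuel
  induction fuel with
  | zero => intro t i hi hit hf hn; omega
  | succ fuel ih =>
    intro t i hi hit hf hn
    obtain ⟨ha1, hat, hamax⟩ := firstIdx_spec n Y (hi.trans hit)
    set a := firstIdx n Y t with ha
    have key : ∀ t', a ≤ t' → t' ≤ t → pooledMean n Y a t ≤ pooledMean n Y a t' := by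
      intro t' h1 h2
      rcases eq_or_lt_of_le h2 with rfl | hlt
      · exact le_rfl
      · exact pooledMean_left_ge n ha1 h1 hlt hn le_rfl
          (hamax (t' + 1) (by omega) (by omega))
    have keyM : ∀ t', a ≤ t' → t' ≤ t → pooledMean n Y a t ≤ blockMax n Y t' :=
      fun t' h1 h2 => (key t' h1 h2).trans (le_blockMax n Y ha1 h1)
    show (if a ≤ i then pooledMean n Y a t else sdmmsaAux n Y fuel (a - 1) i) = _
    by_cases hcase : a ≤ i
    · rw [if_pos hcase]
      apply le_antisymm
      · exact Finset.le_inf' _ _ (fun t' ht' => by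
          rw [Finset.mem_Icc] at ht'
          exact keyM t' (hcase.trans ht'.1) ht'.2)
      · refine (Finset.inf'_le _ (Finset.mem_Icc.mpr ⟨hit, le_rfl⟩)).trans ?_
        exact blockMax_le n Y (hi.trans hit) (fun s h1 h2 => hamax s h1 h2)
    · push_neg at hcase
      rw [if_neg (by omega)]
      have hia : i ≤ a - 1 := by omega
      rw [ih (a - 1) i hi hia (by omega) (fun h h1 h2 => hn h h1 (by omega))]
      have hMa : blockMax n Y (a - 1) ≤ pooledMean n Y a t := by
        refine blockMax_le n Y (by omega) (fun s h1 h2 => ?_)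
        have hm1 : (a - 1) + 1 = a := by omega
        refine pooledMean_left_le n h1 h2 (by omega) hn
          (hamax s h1 (by omega)) ?_
        rw [hm1]
      apply le_antisymm
      · refine Finset.le_inf' _ _ (fun t' ht' => ?_)
        rw [Finset.mem_Icc] at ht'
        by_cases htle : t' ≤ a - 1
        · exact Finset.inf'_le _ (Finset.mem_Icc.mpr ⟨ht'.1, htle⟩)
        · refine (Finset.inf'_le _ (Finset.mem_Icc.mpr ⟨hia, le_rfl⟩)).trans ?_
          exact hMa.trans (keyM t' (by omega) ht'.2)
      · refine Finset.le_inf' _ _ (fun t' ht' => ?_)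
        rw [Finset.mem_Icc] at ht'
        exact Finset.inf'_le _ (Finset.mem_Icc.mpr ⟨ht'.1, by omega⟩)

/-- Pointwise monotonicity of the SDMMSA estimator in the data. -/
private lemma muhat_mono {Y Y' : ℕ → ℝ} (hY : ∀ h, Y h ≤ Y' h) {k i : ℕ}
    (hi : 1 ≤ i) (hik : i ≤ k) (hn : ∀ h, 1 ≤ h → h ≤ k → 0 < n h) :
    muhat n Y k i ≤ muhat n Y' k i := by
  rw [muhat, muhat, sdmmsaAux_minmax n Y k k i hi hik le_rfl hn,
      sdmmsaAux_minmax n Y' k k i hi hik le_rfl hn]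
  refine Finset.le_inf' _ _ (fun t' ht' => ?_)
  refine (Finset.inf'_le _ ht').trans ?_
  rw [Finset.mem_Icc] at ht'
  refine blockMax_le n Y (hi.trans ht'.1) (fun s h1 h2 => ?_)
  exact (pooledMean_mono n hY h1 h2 (fun h a b => hn h a (b.trans ht'.2))).trans
    (le_blockMax n Y' h1 h2)

end AuxLemmas

/-- Theorem 3, stochastic part: if `Ȳ_1,…,Ȳ_k` are independent with
`Ȳ_j ~ N(μ_j, σ²/n_j)`, then for all `i, j ∈ [1,k]` and every real `x`,
`P(μ̂_{i,k}(Ȳ_1,…,Ȳ_k) > x)` is nondecreasing in `μ_j` when the other means and `σ` are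
held fixed; i.e. the distribution of `μ̂_{i,k}` is stochastically nondecreasing in each
`μ_j`.  (The coordinate `v : Fin k` of the product space carries the sample mean
`Ȳ_{v+1}`.) -/
theorem sdmmsa_stochastically_monotone (k : ℕ) (hk : 1 ≤ k) (n : ℕ → ℝ)
    (hn : ∀ h, 1 ≤ h → h ≤ k → 0 < n h)
    (i j : ℕ) (hi1 : 1 ≤ i) (hik : i ≤ k) (hj1 : 1 ≤ j) (hjk : j ≤ k)
    (σ : ℝ) (hσ : 0 < σ) (μ μ' : ℕ → ℝ)
    (hle : μ j ≤ μ' j) (heq : ∀ j', j' ≠ j → μ j' = μ' j') (x : ℝ) :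
    (Measure.pi fun v : Fin k =>
        gaussianReal (μ ((v : ℕ) + 1)) ((σ ^ 2 / n ((v : ℕ) + 1)).toNNReal))
      {ω : Fin k → ℝ |
        x < muhat n (fun t => if h : t - 1 < k then ω ⟨t - 1, h⟩ else 0) k i} ≤
    (Measure.pi fun v : Fin k =>
        gaussianReal (μ' ((v : ℕ) + 1)) ((σ ^ 2 / n ((v : ℕ) + 1)).toNNReal))
      {ω : Fin k → ℝ |
        x < muhat n (fun t => if h : t - 1 < k then ω ⟨t - 1, h⟩ else 0) k i} := by
  have hjk' : j - 1 < k := by omega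
  set jf : Fin k := ⟨j - 1, hjk'⟩ with hjfdef
  have hjf : (jf : ℕ) + 1 = j := by simp [hjfdef]; omega
  set δ : ℝ := μ' j - μ j with hδ
  have hδ0 : 0 ≤ δ := by simp [hδ]; linarith
  set f : Fin k → ℝ → ℝ := fun v y => y + (if v = jf then δ else 0) with hfdef
  have hmp : ∀ v : Fin k, MeasurePreserving (f v)
      (gaussianReal (μ ((v : ℕ) + 1)) ((σ ^ 2 / n ((v : ℕ) + 1)).toNNReal))
      (gaussianReal (μ' ((v : ℕ) + 1)) ((σ ^ 2 / n ((v : ℕ) + 1)).toNNReal)) := by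
    intro v
    refine ⟨measurable_id.add_const _, ?_⟩
    show (gaussianReal _ _).map (· + (if v = jf then δ else 0)) = _
    rw [gaussianReal_map_add_const]
    congr 1
    by_cases hv : v = jf
    · subst hv
      rw [hjf]
      simp [hδ]
    · have hne : (v : ℕ) + 1 ≠ j := by
        intro hh
        apply hv
        apply Fin.ext
        simp [hjfdef]
        omega
      simp [hv, heq _ hne]
  have hT := measurePreserving_pi _ _ hmp
  rw [← hT.map_eq]
  have hsub : {ω : Fin k → ℝ |
        x < muhat n (fun t => if h : t - 1 < k then ω ⟨t - 1, h⟩ else 0) k i} ⊆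
      (fun (a : Fin k → ℝ) (v : Fin k) => f v (a v)) ⁻¹'
        {ω : Fin k → ℝ |
          x < muhat n (fun t => if h : t - 1 < k then ω ⟨t - 1, h⟩ else 0) k i} := by
    intro ω hω
    simp only [Set.mem_setOf_eq, Set.mem_preimage] at hω ⊢
    refine lt_of_lt_of_le hω ?_
    refine muhat_mono n ?_ hi1 hik hn
    intro t
    by_cases ht : t - 1 < k
    · simp only [dif_pos ht, hfdef]
      exact le_add_of_nonneg_right (by split_ifs <;> simp [hδ0])
    · simp [dif_neg ht]
  exact (measure_mono hsub).trans (Measure.le_map_apply hT.measurable.aemeasurable _)
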